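/- The function g_{1/2}(x) = (2√π x^{3/2})^{-1} exp(-1/(4x)) for x > 0 satisfies ∫_0^∞ e^{-px} g_{1/2}(x) dx = exp(-p^{1/2}) for all real p > 0. -/

import Mathlib

set_option maxHeartbeats 1000000


open MeasureTheory Real Set

noncomputable def levySmirnov (x : ℝ) : ℝ :=
  Real.exp (-1 / (4 * x)) / (2 * Real.sqrt π * x ^ ((3 : ℝ) / 2))

lemma glasser_aux_bound {u : ℝ} (hu : 0 < u) : u * Real.exp (-u) ≤ Real.exp (-1) := by
  have h := Real.add_one_le_exp (u - 1)
  have : u ≤ Real.exp (u - 1) := by linarith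
  calc u * Real.exp (-u) ≤ Real.exp (u - 1) * Real.exp (-u) := by
        exact mul_le_mul_of_nonneg_right this (Real.exp_pos _).le
    _ = Real.exp (-1) := by rw [← Real.exp_add]; ring_nf

lemma glasser (c : ℝ) (hc : 0 < c) :
    ∫ t in Ioi (0 : ℝ), Real.exp (-(t ^ 2 + c ^ 2 / t ^ 2))
      = Real.sqrt π / 2 * Real.exp (-(2 * c)) := by
  set h : ℝ → ℝ := fun t => Real.exp (-(t ^ 2 + c ^ 2 / t ^ 2)) with hh
  -- integrability of h on Ioi 0
  have hcont : ContinuousOn h (Ioi 0) := by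
    apply ContinuousOn.rexp
    apply ContinuousOn.neg
    apply ContinuousOn.add (continuous_pow 2).continuousOn
    exact ContinuousOn.div continuousOn_const (continuous_pow 2).continuousOn
      (fun t ht => by have := (mem_Ioi.mp ht); positivity)
  have int_h : IntegrableOn h (Ioi 0) := by
    apply Integrable.mono' ((integrable_exp_neg_mul_sq one_pos).restrict (s := Ioi 0))
    · exact hcont.aestronglyMeasurable measurableSet_Ioi
    · filter_upwards with t
      rw [Real.norm_eq_abs, abs_of_pos (Real.exp_pos _)]
      apply Real.exp_le_exp.mpr
      have : 0 ≤ c ^ 2 / t ^ 2 := by positivity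
      nlinarith
  -- integrability of (c/t^2) * h t on Ioi 0
  have int_g : IntegrableOn (fun t => c / t ^ 2 * h t) (Ioi 0) := by
    apply Integrable.mono'
      (((integrable_exp_neg_mul_sq one_pos).restrict (s := Ioi 0)).const_mul (Real.exp (-1) / c))
    · apply ContinuousOn.aestronglyMeasurable _ measurableSet_Ioi
      exact ContinuousOn.mul (ContinuousOn.div continuousOn_const
        (continuous_pow 2).continuousOn
        (fun t ht => by have := mem_Ioi.mp ht; positivity)) hcont
    · rw [ae_restrict_iff' measurableSet_Ioi]
      filter_upwards with t ht
      have ht : 0 < t := mem_Ioi.mp ht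
      have hct : 0 < c ^ 2 / t ^ 2 := by positivity
      have key := glasser_aux_bound hct
      rw [Real.norm_eq_abs]
      have hexp : h t = Real.exp (-(c ^ 2 / t ^ 2)) * Real.exp (-(t ^ 2)) := by
        rw [hh, ← Real.exp_add]; ring_nf
      have h1 : c / t ^ 2 * Real.exp (-(c ^ 2 / t ^ 2)) ≤ Real.exp (-1) / c := by
        have := key
        have hc2 : c / t ^ 2 = (c ^ 2 / t ^ 2) / c := by field_simp
        rw [hc2, div_mul_eq_mul_div, div_le_div_iff₀ hc hc]
        nlinarith [Real.exp_pos (-(c^2/t^2)), Real.exp_pos (-1)]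
      have h2 : |c / t ^ 2 * h t| = c / t ^ 2 * h t := by
        apply abs_of_nonneg; positivity
      rw [h2, hexp, show (-1:ℝ) * t ^ 2 = -t ^ 2 by ring]
      nlinarith [mul_le_mul_of_nonneg_right h1 (Real.exp_pos (-t ^ 2)).le]
  -- Step 1: substitution u = c/t gives  ∫ h = ∫ (c/t²) h
  have step1 : ∫ t in Ioi (0 : ℝ), h t = ∫ t in Ioi (0 : ℝ), c / t ^ 2 * h t := by
    have himg : (fun t : ℝ => c / t) '' Ioi 0 = Ioi 0 := by
      ext x; simp only [mem_image, mem_Ioi]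
      constructor
      · rintro ⟨t, ht, rfl⟩; positivity
      · intro hx; exact ⟨c / x, by positivity, by field_simp⟩
    have hder : ∀ t ∈ Ioi (0 : ℝ), HasDerivWithinAt (fun t : ℝ => c / t)
        (-(c / t ^ 2)) (Ioi 0) t := by
      intro t ht
      have ht : 0 < t := mem_Ioi.mp ht
      have := (hasDerivAt_inv ht.ne').const_mul c
      simp only [div_eq_mul_inv]
      exact this.hasDerivWithinAt.congr_deriv (by ring)
    have hinj : InjOn (fun t : ℝ => c / t) (Ioi 0) := by
      intro a ha b hb hab
      have ha : 0 < a := mem_Ioi.mp ha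
      have hb : 0 < b := mem_Ioi.mp hb
      simp only at hab
      rw [div_eq_div_iff ha.ne' hb.ne'] at hab
      exact (mul_left_cancel₀ hc.ne' hab).symm
    have := integral_image_eq_integral_abs_deriv_smul measurableSet_Ioi hder hinj h
    rw [himg] at this
    rw [this]
    apply setIntegral_congr_fun measurableSet_Ioi
    intro t ht
    have ht : 0 < t := mem_Ioi.mp ht
    show |(-(c / t ^ 2))| • h (c / t) = c / t ^ 2 * h t
    have hct : h (c / t) = h t := by
      simp only [hh]
      congr 1
      field_simp
      ring
    rw [hct, smul_eq_mul, abs_neg, abs_of_pos (by positivity : (0:ℝ) < c / t ^ 2)]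
  -- Step 2: substitution s = t - c/t
  have step2 : ∫ t in Ioi (0 : ℝ), (1 + c / t ^ 2) * Real.exp (-(t - c / t) ^ 2)
      = Real.sqrt π := by
    have himg : (fun t : ℝ => t - c / t) '' Ioi 0 = univ := by
      apply eq_univ_of_forall
      intro s
      refine ⟨(s + Real.sqrt (s ^ 2 + 4 * c)) / 2, ?_, ?_⟩
      · have h1 : |s| < Real.sqrt (s ^ 2 + 4 * c) := by
          rw [← Real.sqrt_sq_eq_abs]
          exact Real.sqrt_lt_sqrt (sq_nonneg s) (by linarith)
        have := neg_abs_le s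
        simp only [mem_Ioi]
        linarith
      · have hs : Real.sqrt (s ^ 2 + 4 * c) ^ 2 = s ^ 2 + 4 * c :=
          Real.sq_sqrt (by positivity)
        have h1 : |s| < Real.sqrt (s ^ 2 + 4 * c) := by
          rw [← Real.sqrt_sq_eq_abs]
          exact Real.sqrt_lt_sqrt (sq_nonneg s) (by linarith)
        have hpos : 0 < (s + Real.sqrt (s ^ 2 + 4 * c)) / 2 := by
          have := neg_abs_le s; linarith
        show (s + Real.sqrt (s ^ 2 + 4 * c)) / 2
            - c / ((s + Real.sqrt (s ^ 2 + 4 * c)) / 2) = s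
        have hce : c / ((s + Real.sqrt (s ^ 2 + 4 * c)) / 2)
            = (Real.sqrt (s ^ 2 + 4 * c) - s) / 2 := by
          rw [div_eq_iff hpos.ne']
          nlinarith [hs]
        rw [hce]; ring
    have hder : ∀ t ∈ Ioi (0 : ℝ), HasDerivWithinAt (fun t : ℝ => t - c / t)
        (1 + c / t ^ 2) (Ioi 0) t := by
      intro t ht
      have ht : 0 < t := mem_Ioi.mp ht
      have h1 := (hasDerivAt_id t).sub ((hasDerivAt_inv ht.ne').const_mul c)
      simp only [div_eq_mul_inv]
      exact h1.hasDerivWithinAt.congr_deriv (by ring)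
    have hinj : InjOn (fun t : ℝ => t - c / t) (Ioi 0) := by
      apply StrictMonoOn.injOn
      intro a ha b hb hab
      have ha : 0 < a := mem_Ioi.mp ha
      have hb : 0 < b := mem_Ioi.mp hb
      have : c / b < c / a := by
        apply div_lt_div_of_pos_left hc ha hab
      simp only
      linarith
    have := integral_image_eq_integral_abs_deriv_smul measurableSet_Ioi hder hinj
      (fun s => Real.exp (-s ^ 2))
    rw [himg, Measure.restrict_univ] at this
    have hgauss : ∫ s : ℝ, Real.exp (-s ^ 2) = Real.sqrt π := by
      have := integral_gaussian 1
      simpa using this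
    rw [← hgauss, this]
    apply setIntegral_congr_fun measurableSet_Ioi
    intro t ht
    have ht : 0 < t := mem_Ioi.mp ht
    show (1 + c / t ^ 2) * Real.exp (-(t - c / t) ^ 2)
        = |1 + c / t ^ 2| • Real.exp (-(t - c / t) ^ 2)
    rw [smul_eq_mul, abs_of_pos (by positivity : (0:ℝ) < 1 + c / t ^ 2)]
  -- combine
  have hcomb : ∀ t ∈ Ioi (0 : ℝ),
      h t + c / t ^ 2 * h t
        = Real.exp (-(2 * c)) * ((1 + c / t ^ 2) * Real.exp (-(t - c / t) ^ 2)) := by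
    intro t ht
    have ht : 0 < t := mem_Ioi.mp ht
    have hexp : h t = Real.exp (-(2 * c)) * Real.exp (-(t - c / t) ^ 2) := by
      simp only [hh, ← Real.exp_add]
      congr 1
      field_simp
      ring
    rw [hexp]; ring
  have hadd := integral_add int_h int_g
  rw [setIntegral_congr_fun measurableSet_Ioi hcomb, integral_const_mul, step2] at hadd
  rw [← step1] at hadd
  have hfin : Real.sqrt π / 2 * Real.exp (-(2 * c))
      = (Real.exp (-(2 * c)) * Real.sqrt π) / 2 := by ring
  rw [hfin]
  linarith [hadd]

theorem laplace_levySmirnov (p : ℝ) (hp : 0 < p) :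
    ∫ x in Ioi (0 : ℝ), Real.exp (-p * x) * levySmirnov x
      = Real.exp (-Real.sqrt p) := by
  set F : ℝ → ℝ := fun x => Real.exp (-p * x) * levySmirnov x with hF
  have himg : (fun t : ℝ => (4 * t ^ 2)⁻¹) '' Ioi 0 = Ioi 0 := by
    ext x; simp only [mem_image, mem_Ioi]
    constructor
    · rintro ⟨t, ht, rfl⟩; positivity
    · intro hx
      refine ⟨1 / (2 * Real.sqrt x), by positivity, ?_⟩
      have hs : Real.sqrt x ^ 2 = x := Real.sq_sqrt hx.le
      have hs0 : Real.sqrt x ≠ 0 := by positivity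
      field_simp
      linarith
  have hder : ∀ t ∈ Ioi (0 : ℝ), HasDerivWithinAt (fun t : ℝ => (4 * t ^ 2)⁻¹)
      (-(1 / (2 * t ^ 3))) (Ioi 0) t := by
    intro t ht
    have ht : 0 < t := mem_Ioi.mp ht
    have h1 : HasDerivAt (fun t : ℝ => 4 * t ^ 2) (8 * t) t := by
      have := ((hasDerivAt_pow 2 t).const_mul (4 : ℝ))
      exact this.congr_deriv (by norm_num; ring)
    have h2 := h1.inv (by positivity)
    exact h2.hasDerivWithinAt.congr_deriv (by field_simp; ring)
  have hinj : InjOn (fun t : ℝ => (4 * t ^ 2)⁻¹) (Ioi 0) := by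
    intro a ha b hb hab
    have ha : 0 < a := mem_Ioi.mp ha
    have hb : 0 < b := mem_Ioi.mp hb
    simp only [inv_inj] at hab
    nlinarith
  have key := integral_image_eq_integral_abs_deriv_smul measurableSet_Ioi hder hinj F
  rw [himg] at key
  set c : ℝ := Real.sqrt p / 2 with hc
  have hc0 : 0 < c := by positivity
  have hcsq : c ^ 2 = p / 4 := by
    rw [hc]; rw [div_pow, Real.sq_sqrt hp.le]; norm_num
  have heq : ∀ t ∈ Ioi (0 : ℝ),
      |(-(1 / (2 * t ^ 3)))| • F ((4 * t ^ 2)⁻¹)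
        = 2 / Real.sqrt π * Real.exp (-(t ^ 2 + c ^ 2 / t ^ 2)) := by
    intro t ht
    have ht : 0 < t := mem_Ioi.mp ht
    have hpi : (0:ℝ) < Real.sqrt π := Real.sqrt_pos.mpr Real.pi_pos
    have h2t : (0:ℝ) < 2 * t := by positivity
    have hrpow : ((4 * t ^ 2 : ℝ)) ^ ((3:ℝ)/2) = 8 * t ^ 3 := by
      rw [show (4 * t ^ 2 : ℝ) = (2*t) ^ (2:ℕ) by ring, ← Real.rpow_natCast (2*t) 2,
        ← Real.rpow_mul h2t.le]
      norm_num
      ring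
    have hrpow' : ((4 * t ^ 2 : ℝ)⁻¹) ^ ((3:ℝ)/2) = (8 * t ^ 3)⁻¹ := by
      rw [Real.inv_rpow (by positivity), hrpow]
    have hlev : levySmirnov ((4 * t ^ 2)⁻¹)
        = Real.exp (-(t ^ 2)) * (8 * t ^ 3) / (2 * Real.sqrt π) := by
      unfold levySmirnov
      rw [hrpow']
      rw [show (-1 : ℝ) / (4 * (4 * t ^ 2)⁻¹) = -(t ^ 2) by
        rw [div_eq_iff (by positivity)]; field_simp]
      rw [div_eq_div_iff (by positivity) (by positivity)]
      field_simp
    rw [smul_eq_mul, abs_neg, abs_of_pos (show (0:ℝ) < 1/(2*t^3) by positivity), hF]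
    simp only
    rw [hlev]
    rw [show -(t ^ 2 + c ^ 2 / t ^ 2) = (-p * (4 * t ^ 2)⁻¹) + (-(t ^ 2)) by
      rw [hcsq]; field_simp; ring]
    rw [Real.exp_add]
    field_simp
    ring
  rw [key, setIntegral_congr_fun measurableSet_Ioi heq, integral_const_mul, glasser c hc0]
  have h2c : 2 * c = Real.sqrt p := by rw [hc]; ring
  rw [h2c]
  have hpi : (0:ℝ) < Real.sqrt π := Real.sqrt_pos.mpr Real.pi_pos
  field_simp
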